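/- Let θ > 0 and n ∈ (1,3). Then problem (P) has at most one solution: if H₁ and H₂ are both solutions of (P), then H₁ = H₂ on [0,1]. (The proof proceeds by showing the auxiliary function Φ := (H₁−H₂)(H₁−H₂)″ − ((H₁−H₂)′)²/2 vanishes at x = 0, is nondecreasing on (0,1), and forces ((H₁−H₂)²)′ ≡ 0.) -/

import Mathlib

open Set Filter Topology

lemma iter3_eq (f : ℝ → ℝ) : deriv^[3] f = deriv (deriv (deriv f)) := by
  simp [Function.iterate_succ_apply']

/-- derivative package for a C³ function on an open set -/
lemma derivPack {f : ℝ → ℝ} {s : Set ℝ} (hs : IsOpen s) (hf : ContDiffOn ℝ 3 f s) :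
    (∀ x ∈ s, HasDerivAt f (deriv f x) x) ∧
    (∀ x ∈ s, HasDerivAt (deriv f) (deriv (deriv f) x) x) ∧
    (∀ x ∈ s, HasDerivAt (deriv (deriv f)) (deriv (deriv (deriv f)) x) x) ∧
    ContinuousOn (deriv (deriv (deriv f))) s := by
  have h1 : ContDiffOn ℝ 2 (deriv f) s := hf.deriv_of_isOpen hs (by norm_num)
  have h2 : ContDiffOn ℝ 1 (deriv (deriv f)) s := h1.deriv_of_isOpen hs (by norm_num)
  have h3 : ContDiffOn ℝ 0 (deriv (deriv (deriv f))) s := h2.deriv_of_isOpen hs (by norm_num)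
  refine ⟨fun x hx => ?_, fun x hx => ?_, fun x hx => ?_, h3.continuousOn⟩
  · exact (((hf.differentiableOn (by norm_num)) x hx).differentiableAt
      (hs.mem_nhds hx)).hasDerivAt
  · exact (((h1.differentiableOn (by norm_num)) x hx).differentiableAt
      (hs.mem_nhds hx)).hasDerivAt
  · exact (((h2.differentiableOn (by norm_num)) x hx).differentiableAt
      (hs.mem_nhds hx)).hasDerivAt

/-- MVT bound for `t ↦ (t ^ (n-1))⁻¹`. -/
lemma inv_rpow_diff_bound {n : ℝ} (hn : 1 < n) {a b m : ℝ} (hm : 0 < m)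
    (ha : m ≤ a) (hb : m ≤ b) :
    |(a ^ (n - 1))⁻¹ - (b ^ (n - 1))⁻¹| ≤ (n - 1) * m ^ (-n) * |a - b| := by
  have key : ∀ p q : ℝ, m ≤ p → m ≤ q → q < p →
      |(p ^ (n - 1))⁻¹ - (q ^ (n - 1))⁻¹| ≤ (n - 1) * m ^ (-n) * |p - q| := by
    intro p q hp hq hqp
    have hq0 : 0 < q := lt_of_lt_of_le hm hq
    have hp0 : 0 < p := lt_of_lt_of_le hm hp
    -- rewrite inverses as rpow with exponent 1 - n
    have hrw : ∀ t : ℝ, 0 < t → (t ^ (n - 1))⁻¹ = t ^ (1 - n) := by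
      intro t ht
      rw [show (1 - n) = -(n - 1) by ring, Real.rpow_neg ht.le]
    have hderiv : ∀ t ∈ Ioo q p, HasDerivAt (fun u : ℝ => u ^ (1 - n))
        ((1 - n) * t ^ (-n)) t := by
      intro t ht
      have ht0 : t ≠ 0 := (lt_trans hq0 ht.1).ne'
      have := Real.hasDerivAt_rpow_const (x := t) (p := 1 - n) (Or.inl ht0)
      convert this using 2
      ring
    have hcont : ContinuousOn (fun u : ℝ => u ^ (1 - n)) (Icc q p) := by
      intro t ht
      exact (Real.continuousAt_rpow_const t _ (Or.inl (lt_of_lt_of_le hq0 ht.1).ne')).continuousWithinAt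
    obtain ⟨c, hc, hceq⟩ := exists_hasDerivAt_eq_slope (fun u : ℝ => u ^ (1 - n))
      (fun t => (1 - n) * t ^ (-n)) hqp hcont hderiv
    have hc0 : 0 < c := lt_trans hq0 hc.1
    have heq : p ^ (1 - n) - q ^ (1 - n) = (1 - n) * c ^ (-n) * (p - q) := by
      rw [eq_div_iff (sub_ne_zero.mpr hqp.ne')] at hceq
      linarith
    have hcm : c ^ (-n) ≤ m ^ (-n) := by
      rw [Real.rpow_neg hm.le, Real.rpow_neg hc0.le]
      have h1 : m ^ n ≤ c ^ n :=
        Real.rpow_le_rpow hm.le (le_trans hq (le_of_lt hc.1)) (by linarith)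
      exact inv_anti₀ (Real.rpow_pos_of_pos hm n) h1
    rw [hrw p hp0, hrw q hq0, heq]
    rw [abs_mul]
    apply mul_le_mul _ le_rfl (abs_nonneg _)
      (mul_nonneg (by linarith) (Real.rpow_pos_of_pos hm _).le)
    rw [abs_mul]
    have h1n : |1 - n| = n - 1 := by rw [abs_of_nonpos (by linarith)]; ring
    rw [h1n, abs_of_pos (Real.rpow_pos_of_pos hc0 _)]
    exact mul_le_mul_of_nonneg_left hcm (by linarith)
  rcases lt_trichotomy a b with h | h | h
  · have := key b a hb ha h
    rw [abs_sub_comm ((a ^ (n - 1))⁻¹) _, abs_sub_comm a b]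
    exact this
  · simp [h]
  · exact key a b ha hb h

/-- Problem (P): the similarity boundary-value problem for the thin-film equation. -/
def IsSolP (n θ : ℝ) (H : ℝ → ℝ) : Prop :=
  ContDiffOn ℝ 1 H (Set.Icc 0 1) ∧
  ContDiffOn ℝ 3 H (Set.Ioo 0 1) ∧
  (∀ x ∈ Set.Ioo (0:ℝ) 1, 0 < H x) ∧
  (∀ x ∈ Set.Ioo (0:ℝ) 1, H x ^ (n - 1) * deriv^[3] H x = -1 + x) ∧
  H 0 = 0 ∧
  derivWithin H (Set.Icc 0 1) 0 = θ ∧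
  derivWithin H (Set.Icc 0 1) 1 = 0

set_option maxHeartbeats 1000000 in
/-- Uniqueness for nonzero dynamic contact angles, `n ∈ (1,3)`: problem (P) has at most
one solution. -/
theorem thinfilm_uniqueness_n_gt_one (n θ : ℝ) (hn1 : 1 < n) (hn3 : n < 3) (hθ : 0 < θ) :
    ∀ H₁ H₂ : ℝ → ℝ, IsSolP n θ H₁ → IsSolP n θ H₂ →
      Set.EqOn H₁ H₂ (Set.Icc 0 1) := by
  intro H₁ H₂ h1 h2
  obtain ⟨hC1₁, hC3₁, hpos₁, hode₁, h0₁, hd0₁, hd1₁⟩ := h1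
  obtain ⟨hC1₂, hC3₂, hpos₂, hode₂, h0₂, hd0₂, hd1₂⟩ := h2
  have h01 : (0:ℝ) < 1 := one_pos
  set s : Set ℝ := Ioo 0 1 with hs_def
  have hs : IsOpen s := isOpen_Ioo
  set w : ℝ → ℝ := fun x => H₁ x - H₂ x with hw_def
  have hw0 : w 0 = 0 := by simp [hw_def, h0₁, h0₂]
  have hwC1 : ContDiffOn ℝ 1 w (Icc 0 1) := hC1₁.sub hC1₂
  have hwC3 : ContDiffOn ℝ 3 w s := hC3₁.sub hC3₂
  obtain ⟨P₁0, P₁1, P₁2, P₁c⟩ := derivPack hs hC3₁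
  obtain ⟨P₂0, P₂1, P₂2, P₂c⟩ := derivPack hs hC3₂
  obtain ⟨Pw0, Pw1, Pw2, Pwc⟩ := derivPack hs hwC3
  set w1 : ℝ → ℝ := deriv w with hw1_def
  set w2 : ℝ → ℝ := deriv w1 with hw2_def
  set w3 : ℝ → ℝ := deriv w2 with hw3_def
  -- first derivative of w on s
  have hEq1 : EqOn w1 (fun x => deriv H₁ x - deriv H₂ x) s := fun x hx =>
    deriv_sub (P₁0 x hx).differentiableAt (P₂0 x hx).differentiableAt
  have hEq2 : EqOn w2 (fun x => deriv (deriv H₁) x - deriv (deriv H₂) x) s := by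
    intro x hx
    have e : w1 =ᶠ[nhds x] fun y => deriv H₁ y - deriv H₂ y :=
      eventually_of_mem (hs.mem_nhds hx) (fun y hy => hEq1 hy)
    rw [hw2_def, e.deriv_eq]
    exact deriv_sub (P₁1 x hx).differentiableAt (P₂1 x hx).differentiableAt
  have hEq3 : EqOn w3 (fun x => deriv (deriv (deriv H₁)) x - deriv (deriv (deriv H₂)) x) s := by
    intro x hx
    have e : w2 =ᶠ[nhds x] fun y => deriv (deriv H₁) y - deriv (deriv H₂) y :=
      eventually_of_mem (hs.mem_nhds hx) (fun y hy => hEq2 hy)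
    rw [hw3_def, e.deriv_eq]
    exact deriv_sub (P₁2 x hx).differentiableAt (P₂2 x hx).differentiableAt
  -- ODE for w'''
  have hODE : ∀ x ∈ s, w3 x = (x - 1) * ((H₁ x ^ (n-1))⁻¹ - (H₂ x ^ (n-1))⁻¹) := by
    intro x hx
    have hx1 := hpos₁ x hx
    have hx2 := hpos₂ x hx
    have hne₁ : H₁ x ^ (n-1) ≠ 0 := (Real.rpow_pos_of_pos hx1 _).ne'
    have hne₂ : H₂ x ^ (n-1) ≠ 0 := (Real.rpow_pos_of_pos hx2 _).ne'
    have e₁ : deriv (deriv (deriv H₁)) x = (-1 + x) * (H₁ x ^ (n-1))⁻¹ := by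
      have h := hode₁ x hx
      rw [iter3_eq] at h
      field_simp
      linarith [h]
    have e₂ : deriv (deriv (deriv H₂)) x = (-1 + x) * (H₂ x ^ (n-1))⁻¹ := by
      have h := hode₂ x hx
      rw [iter3_eq] at h
      field_simp
      linarith [h]
    rw [hEq3 hx]
    simp only [e₁, e₂]
    ring
  -- sign of w * w'''
  have hsign : ∀ x ∈ s, 0 ≤ w x * w3 x := by
    intro x hx
    have hx1 := hpos₁ x hx
    have hx2 := hpos₂ x hx
    have hxlt : x - 1 < 0 := by
      have := hx.2
      linarith [hx.2]
    rw [hODE x hx]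
    rcases lt_trichotomy (H₁ x) (H₂ x) with h | h | h
    · have hr : H₁ x ^ (n-1) < H₂ x ^ (n-1) := Real.rpow_lt_rpow hx1.le h (by linarith)
      have hi : (H₂ x ^ (n-1))⁻¹ < (H₁ x ^ (n-1))⁻¹ :=
        inv_strictAnti₀ (Real.rpow_pos_of_pos hx1 _) hr
      have h3 : 0 < (H₂ x - H₁ x) * ((1 - x) * ((H₁ x ^ (n-1))⁻¹ - (H₂ x ^ (n-1))⁻¹)) :=
        mul_pos (by linarith) (mul_pos (by linarith) (by linarith))
      have hwx : w x = H₁ x - H₂ x := rfl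
      nlinarith [h3]
    · have hwx : w x = 0 := by simp [hw_def, h]
      simp [hwx]
    · have hr : H₂ x ^ (n-1) < H₁ x ^ (n-1) := Real.rpow_lt_rpow hx2.le h (by linarith)
      have hi : (H₁ x ^ (n-1))⁻¹ < (H₂ x ^ (n-1))⁻¹ :=
        inv_strictAnti₀ (Real.rpow_pos_of_pos hx2 _) hr
      have h3 : 0 < (H₁ x - H₂ x) * ((1 - x) * ((H₂ x ^ (n-1))⁻¹ - (H₁ x ^ (n-1))⁻¹)) :=
        mul_pos (by linarith) (mul_pos (by linarith) (by linarith))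
      have hwx : w x = H₁ x - H₂ x := rfl
      nlinarith [h3]
  -- Φ machinery
  set Φ : ℝ → ℝ := fun y => w y * w2 y - (w1 y)^2 / 2 with hΦ_def
  have hΦderiv : ∀ x ∈ s, HasDerivAt Φ (w x * w3 x) x := by
    intro x hx
    have ha := (Pw0 x hx).mul (Pw2 x hx)
    have hb := ((Pw1 x hx).fun_pow 2).div_const 2
    have hc := ha.sub hb
    have e : w x * w3 x = w1 x * w2 x + w x * w3 x - ((2:ℕ):ℝ) * w1 x ^ (2 - 1) * w2 x / 2 := by
      push_cast; ring
    rw [e]; exact hc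
  have hΦmono : MonotoneOn Φ s := by
    apply monotoneOn_of_deriv_nonneg (convex_Ioo 0 1)
    · exact fun x hx => (hΦderiv x hx).continuousAt.continuousWithinAt
    · intro x hx
      rw [hs.interior_eq] at hx
      exact (hΦderiv x hx).differentiableAt.differentiableWithinAt
    · intro x hx
      rw [hs.interior_eq] at hx
      rw [(hΦderiv x hx).deriv]
      exact hsign x hx
  -- derivWithin on the closed interval
  have hUD : UniqueDiffOn ℝ (Icc (0:ℝ) 1) := uniqueDiffOn_Icc h01
  set DW : ℝ → ℝ := derivWithin w (Icc 0 1) with hDW_def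
  have hmem0 : (0:ℝ) ∈ Icc (0:ℝ) 1 := left_mem_Icc.mpr h01.le
  have hmem1 : (1:ℝ) ∈ Icc (0:ℝ) 1 := right_mem_Icc.mpr h01.le
  have hDW0 : DW 0 = 0 := by
    rw [hDW_def, hw_def]
    rw [derivWithin_fun_sub
      ((hC1₁.differentiableOn one_ne_zero) 0 hmem0) ((hC1₂.differentiableOn one_ne_zero) 0 hmem0)]
    rw [hd0₁, hd0₂]; ring
  have hDW1 : DW 1 = 0 := by
    rw [hDW_def, hw_def]
    rw [derivWithin_fun_sub
      ((hC1₁.differentiableOn one_ne_zero) 1 hmem1) ((hC1₂.differentiableOn one_ne_zero) 1 hmem1)]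
    rw [hd1₁, hd1₂]; ring
  have hDWcont : ContinuousOn DW (Icc 0 1) := hwC1.continuousOn_derivWithin hUD le_rfl
  have hsubIcc : s ⊆ Icc 0 1 := Ioo_subset_Icc_self
  have hderiv_eq : ∀ x ∈ s, w1 x = DW x := by
    intro x hx
    rw [hw1_def, hDW_def, derivWithin_of_mem_nhds (Icc_mem_nhds hx.1 hx.2)]
  have hnb0 : 𝓝[s] (0:ℝ) = 𝓝[>] (0:ℝ) := nhdsWithin_Ioo_eq_nhdsGT h01
  have hnb1 : 𝓝[s] (1:ℝ) = 𝓝[<] (1:ℝ) := nhdsWithin_Ioo_eq_nhdsLT h01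
  -- w1 tends to 0 at 0⁺
  have hw1tend : Tendsto w1 (𝓝[>] (0:ℝ)) (nhds 0) := by
    have t1 : Tendsto DW (𝓝[Icc 0 1] (0:ℝ)) (nhds 0) := by
      have := (hDWcont 0 hmem0).tendsto
      rwa [hDW0] at this
    have t2 : Tendsto DW (𝓝[s] (0:ℝ)) (nhds 0) := t1.mono_left (nhdsWithin_mono _ hsubIcc)
    rw [← hnb0]
    exact t2.congr' (eventually_of_mem self_mem_nhdsWithin fun y hy => (hderiv_eq y hy).symm)
  -- smallness of w near 0
  have hw_small : ∀ ε : ℝ, 0 < ε → ∀ᶠ x in 𝓝[>] (0:ℝ), |w x| ≤ ε * x := by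
    intro ε hε
    have hdw0 : HasDerivWithinAt w 0 (Icc 0 1) 0 := by
      have := ((hwC1.differentiableOn one_ne_zero) 0 hmem0).hasDerivWithinAt
      rwa [← hDW_def, hDW0] at this
    have hlo := (hasDerivWithinAt_iff_isLittleO.mp hdw0).def hε
    rw [← hnb0]
    have hlo' := hlo.filter_mono (nhdsWithin_mono (0:ℝ) hsubIcc)
    filter_upwards [hlo', self_mem_nhdsWithin] with x hx hxs
    simp only [hw0, smul_zero, sub_zero] at hx
    rw [Real.norm_eq_abs, Real.norm_eq_abs] at hx
    calc |w x| ≤ ε * |x| := hx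
    _ = ε * x := by rw [abs_of_pos (hxs.1 : (0:ℝ) < x)]
  -- lower bounds for H₁, H₂ near 0
  have hHlow : ∀ H : ℝ → ℝ, ContDiffOn ℝ 1 H (Icc 0 1) → H 0 = 0 →
      derivWithin H (Icc 0 1) 0 = θ → ∀ᶠ x in 𝓝[>] (0:ℝ), θ/2 * x ≤ H x := by
    intro H hC hH0 hd
    have hdw : HasDerivWithinAt H θ (Icc 0 1) 0 := by
      have := ((hC.differentiableOn one_ne_zero) 0 hmem0).hasDerivWithinAt
      rwa [hd] at this
    have hlo := (hasDerivWithinAt_iff_isLittleO.mp hdw).def (half_pos hθ)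
    rw [← hnb0]
    have hlo' := hlo.filter_mono (nhdsWithin_mono (0:ℝ) hsubIcc)
    filter_upwards [hlo', self_mem_nhdsWithin] with x hx hxs
    have hx0 : (0:ℝ) < x := hxs.1
    simp only [hH0, sub_zero, smul_eq_mul] at hx
    rw [Real.norm_eq_abs, Real.norm_eq_abs, abs_of_pos hx0] at hx
    have := abs_le.mp hx
    nlinarith [this.1, this.2]
  set C : ℝ := (n-1) * (θ/2)^(-n) with hC_def
  have hCpos : 0 < C := mul_pos (by linarith) (Real.rpow_pos_of_pos (by positivity) _)
  have hmemev : ∀ᶠ t in 𝓝[>] (0:ℝ), t ∈ s :=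
    eventually_of_mem (Ioo_mem_nhdsGT h01) (fun t ht => ht)
  -- pointwise bound for w3 near 0
  have hw3b : ∀ ε : ℝ, 0 < ε → ∀ᶠ t in 𝓝[>] (0:ℝ), |w3 t| ≤ C * ε * t ^ (-2 : ℝ) := by
    intro ε hε
    filter_upwards [hw_small ε hε, hHlow H₁ hC1₁ h0₁ hd0₁, hHlow H₂ hC1₂ h0₂ hd0₂,
      hmemev] with t h1 h2 h3 hts
    have ht0 : 0 < t := hts.1
    have ht1 : t < 1 := hts.2
    have hm : 0 < θ/2 * t := by positivity
    have hb := inv_rpow_diff_bound hn1 hm h2 h3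
    rw [hODE t hts, abs_mul]
    have h4 : |t - 1| ≤ 1 := by rw [abs_of_nonpos (by linarith)]; linarith
    have h1' : |H₁ t - H₂ t| ≤ ε * t := h1
    have hb2 : |(H₁ t ^ (n-1))⁻¹ - (H₂ t ^ (n-1))⁻¹| ≤ (n-1) * (θ/2*t)^(-n) * (ε*t) :=
      le_trans hb (mul_le_mul_of_nonneg_left h1'
        (mul_nonneg (by linarith) (Real.rpow_pos_of_pos hm _).le))
    have hmul : (θ/2*t)^(-n) = (θ/2)^(-n) * t^(-n) := Real.mul_rpow (by positivity) ht0.le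
    have ht_pow : t^(-n) * t = t^(1-n) := by
      nth_rewrite 2 [← Real.rpow_one t]
      rw [← Real.rpow_add ht0]
      ring_nf
    have hpow2 : t^(1-n) ≤ t^(-2:ℝ) := by
      have he : t^(1-n) = t^(3-n) * t^(-2:ℝ) := by
        rw [← Real.rpow_add ht0]; ring_nf
      rw [he]
      have h5 : t^(3-n) ≤ 1 := Real.rpow_le_one ht0.le ht1.le (by linarith)
      nlinarith [Real.rpow_pos_of_pos ht0 (-2:ℝ), h5]
    calc |t - 1| * |(H₁ t ^ (n-1))⁻¹ - (H₂ t ^ (n-1))⁻¹|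
        ≤ 1 * ((n-1) * ((θ/2)^(-n) * t^(-n)) * (ε*t)) := by
          rw [hmul] at hb2
          exact mul_le_mul h4 hb2 (abs_nonneg _) one_pos.le
    _ = C * ε * (t^(-n) * t) := by rw [hC_def]; ring
    _ = C * ε * t^(1-n) := by rw [ht_pow]
    _ ≤ C * ε * t^(-2:ℝ) := mul_le_mul_of_nonneg_left hpow2 (by positivity)
  -- key estimate for w * w''
  have hkey : ∀ ε : ℝ, 0 < ε → ε ≤ 1 → ∀ᶠ x in 𝓝[>] (0:ℝ), |w x * w2 x| ≤ (C+1) * ε := by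
    intro ε hε hε1
    have hev : ∀ᶠ t in 𝓝[>] (0:ℝ), (|w t| ≤ ε*t ∧ |w3 t| ≤ C*ε*t^(-2:ℝ)) ∧ t ∈ s :=
      ((hw_small ε hε).and (hw3b ε hε)).and hmemev
    obtain ⟨u, hu, huP⟩ := mem_nhdsGT_iff_exists_Ioo_subset.mp hev
    have hu0 : (0:ℝ) < u := hu
    set x₀ : ℝ := min (u/2) (1/2) with hx₀_def
    have hx₀pos : 0 < x₀ := lt_min (by linarith) (by norm_num)
    have hx₀u : x₀ < u := lt_of_le_of_lt (min_le_left _ _) (by linarith)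
    have hP₀ := huP ⟨hx₀pos, hx₀u⟩
    set B : ℝ := |w2 x₀| with hB_def
    have hBnn : 0 ≤ B := abs_nonneg _
    have hw2bound : ∀ x ∈ Ioo (0:ℝ) x₀, |w2 x| ≤ B + C * ε * x⁻¹ := by
      intro x hx
      have hx0 : 0 < x := hx.1
      have hxx₀ : x < x₀ := hx.2
      have hsub : Icc x x₀ ⊆ Ioo 0 u := fun t ht =>
        ⟨lt_of_lt_of_le hx0 ht.1, lt_of_le_of_lt ht.2 hx₀u⟩
      have hsubs : Icc x x₀ ⊆ s := fun t ht => (huP (hsub ht)).2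
      have hFTC : ∫ t in x..x₀, w3 t = w2 x₀ - w2 x := by
        apply intervalIntegral.integral_eq_sub_of_hasDerivAt
        · intro t ht
          rw [uIcc_of_le hxx₀.le] at ht
          exact Pw2 t (hsubs ht)
        · apply ContinuousOn.intervalIntegrable
          rw [uIcc_of_le hxx₀.le]
          exact Pwc.mono hsubs
      have hgint : IntervalIntegrable (fun t => C*ε*t^(-2:ℝ)) MeasureTheory.volume x x₀ := by
        apply ContinuousOn.intervalIntegrable
        intro t ht
        rw [uIcc_of_le hxx₀.le] at ht
        exact ((Real.continuousAt_rpow_const t (-2:ℝ)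
          (Or.inl (lt_of_lt_of_le hx0 ht.1).ne')).continuousWithinAt).const_mul (C*ε)
      have hIbound : ‖∫ t in x..x₀, w3 t‖ ≤ |∫ t in x..x₀, C*ε*t^(-2:ℝ)| := by
        apply intervalIntegral.norm_integral_le_abs_of_norm_le _ hgint
        apply (MeasureTheory.ae_restrict_mem measurableSet_uIoc).mono
        intro t ht
        rw [Real.norm_eq_abs]
        rw [uIoc_of_le hxx₀.le] at ht
        exact (huP (hsub ⟨ht.1.le, ht.2⟩)).1.2
      have h0notin : (0:ℝ) ∉ Set.uIcc x x₀ := by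
        rw [uIcc_of_le hxx₀.le]
        exact fun h => absurd h.1 (not_le.mpr hx0)
      have hIval : ∫ t in x..x₀, C*ε*t^(-2:ℝ) = C*ε*(x⁻¹ - x₀⁻¹) := by
        have hint := integral_rpow (a := x) (b := x₀) (r := -2)
          (Or.inr ⟨by norm_num, h0notin⟩)
        rw [show (-2:ℝ) + 1 = -1 by norm_num] at hint
        rw [Real.rpow_neg_one, Real.rpow_neg_one] at hint
        rw [intervalIntegral.integral_const_mul, hint]
        ring
      have hIle : |∫ t in x..x₀, w3 t| ≤ C*ε*(x⁻¹ - x₀⁻¹) := by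
        have hle : x₀⁻¹ ≤ x⁻¹ := by
          apply inv_anti₀ hx0 hxx₀.le
        have habs : |C*ε*(x⁻¹ - x₀⁻¹)| = C*ε*(x⁻¹ - x₀⁻¹) := by
          apply abs_of_nonneg
          have : (0:ℝ) ≤ x⁻¹ - x₀⁻¹ := by linarith
          positivity
        calc |∫ t in x..x₀, w3 t| ≤ |∫ t in x..x₀, C*ε*t^(-2:ℝ)| := hIbound
        _ = |C*ε*(x⁻¹ - x₀⁻¹)| := by rw [hIval]
        _ = C*ε*(x⁻¹ - x₀⁻¹) := habs
      have h6 : w2 x = w2 x₀ - ∫ t in x..x₀, w3 t := by linarith [hFTC]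
      calc |w2 x| = |w2 x₀ - ∫ t in x..x₀, w3 t| := by rw [← h6]
      _ ≤ |w2 x₀| + |∫ t in x..x₀, w3 t| := abs_sub _ _
      _ ≤ B + C*ε*(x⁻¹ - x₀⁻¹) := add_le_add le_rfl hIle
      _ ≤ B + C*ε*x⁻¹ := by
          have h9 : 0 < x₀⁻¹ := by positivity
          nlinarith [mul_pos (mul_pos hCpos hε) h9]
    have hxε : 0 < min x₀ (ε/(B+1)) := lt_min hx₀pos (by positivity)
    filter_upwards [Ioo_mem_nhdsGT hxε, hw_small ε hε] with x hx hwx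
    have hx0 : 0 < x := hx.1
    have hx1 : x < x₀ := lt_of_lt_of_le hx.2 (min_le_left _ _)
    have hx2 : x ≤ ε/(B+1) := le_trans hx.2.le (min_le_right _ _)
    have h7 := hw2bound x ⟨hx0, hx1⟩
    have hq : ε/(B+1) * B ≤ ε := by
      rw [div_mul_eq_mul_div, div_le_iff₀ (by linarith)]
      nlinarith
    calc |w x * w2 x| = |w x| * |w2 x| := abs_mul _ _
    _ ≤ (ε*x) * (B + C*ε*x⁻¹) := mul_le_mul hwx h7 (abs_nonneg _) (by positivity)
    _ = x*B*ε + C*ε*ε*(x*x⁻¹) := by ring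
    _ = x*B*ε + C*ε*ε := by rw [mul_inv_cancel₀ hx0.ne']; ring
    _ ≤ (C+1)*ε := by
        have h8 : x*B ≤ ε := le_trans (mul_le_mul_of_nonneg_right hx2 hBnn) hq
        nlinarith [mul_le_mul_of_nonneg_right h8 hε.le,
          mul_le_mul_of_nonneg_left hε1 (mul_nonneg hCpos.le hε.le),
          mul_le_mul_of_nonneg_left hε1 hε.le]
  -- Φ tends to 0 at 0⁺
  have hΦtend : Tendsto Φ (𝓝[>] (0:ℝ)) (𝓝 0) := by
    have h1 : Tendsto (fun x => w x * w2 x) (𝓝[>] (0:ℝ)) (𝓝 0) := by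
      rw [NormedAddCommGroup.tendsto_nhds_zero]
      intro ε' hε'
      have hεp : 0 < min 1 (ε'/(2*(C+1))) := lt_min one_pos (by positivity)
      filter_upwards [hkey _ hεp (min_le_left _ _)] with x hx
      rw [Real.norm_eq_abs]
      calc |w x * w2 x| ≤ (C+1) * min 1 (ε'/(2*(C+1))) := hx
      _ ≤ (C+1) * (ε'/(2*(C+1))) := mul_le_mul_of_nonneg_left (min_le_right _ _) (by linarith)
      _ = ε'/2 := by field_simp
      _ < ε' := by linarith
    have h2 : Tendsto (fun x => (w1 x)^2/2) (𝓝[>] (0:ℝ)) (𝓝 0) := by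
      have h3 := (hw1tend.pow 2).div_const 2
      norm_num at h3
      exact h3
    have h4 := h1.sub h2
    rw [sub_zero] at h4
    exact h4
  have hΦnonneg : ∀ x ∈ s, 0 ≤ Φ x := by
    intro x hx
    apply le_of_tendsto hΦtend
    filter_upwards [Ioo_mem_nhdsGT hx.1] with y hy
    exact hΦmono (show y ∈ s from ⟨hy.1, lt_trans hy.2 hx.2⟩) hx hy.2.le
  -- monotonicity of 2 w w'
  have hG1deriv : ∀ x ∈ s, HasDerivAt (fun y => 2 * w y * w1 y)
      (2 * w1 x * w1 x + 2 * w x * w2 x) x := by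
    intro x hx
    exact ((Pw0 x hx).const_mul 2).mul (Pw1 x hx)
  have hG1mono : MonotoneOn (fun y => 2 * w y * w1 y) s := by
    apply monotoneOn_of_deriv_nonneg (convex_Ioo 0 1)
    · exact fun x hx => (hG1deriv x hx).continuousAt.continuousWithinAt
    · intro x hx
      rw [hs.interior_eq] at hx
      exact (hG1deriv x hx).differentiableAt.differentiableWithinAt
    · intro x hx
      rw [hs.interior_eq] at hx
      rw [(hG1deriv x hx).deriv]
      have hp : 0 ≤ w x * w2 x - w1 x ^ 2 / 2 := hΦnonneg x hx
      have hq : w1 x ^ 2 = w1 x * w1 x := pow_two (w1 x)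
      rw [hq] at hp
      clear_value w3 w2 w1 w
      linarith [hp, mul_self_nonneg (w1 x)]
  set G : ℝ → ℝ := fun y => 2 * w y * DW y with hG_def
  have hGcont : ContinuousOn G (Icc 0 1) :=
    (continuousOn_const.mul hwC1.continuousOn).mul hDWcont
  have hGeq : ∀ y ∈ s, G y = 2 * w y * w1 y := by
    intro y hy
    simp only [hG_def]
    rw [← hderiv_eq y hy]
  have hG0 : G 0 = 0 := by simp [hG_def, hw0]
  have hG1v : G 1 = 0 := by simp [hG_def, hDW1]
  have hzero : ∀ x ∈ s, 2 * w x * w1 x = 0 := by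
    intro x hx
    have tend1 : Tendsto G (𝓝[s] (1:ℝ)) (𝓝 0) := by
      have h5 := (hGcont 1 hmem1).tendsto
      rw [hG1v] at h5
      exact h5.mono_left (nhdsWithin_mono _ hsubIcc)
    have tend0 : Tendsto G (𝓝[s] (0:ℝ)) (𝓝 0) := by
      have h5 := (hGcont 0 hmem0).tendsto
      rw [hG0] at h5
      exact h5.mono_left (nhdsWithin_mono _ hsubIcc)
    rw [hnb1] at tend1
    rw [hnb0] at tend0
    have hupper : 2 * w x * w1 x ≤ 0 := by
      apply ge_of_tendsto tend1
      filter_upwards [Ioo_mem_nhdsLT_of_mem (⟨hx.2, le_rfl⟩ : (1:ℝ) ∈ Ioc x 1)] with y hy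
      have hys : y ∈ s := ⟨lt_trans hx.1 hy.1, hy.2⟩
      rw [hGeq y hys]
      exact hG1mono hx hys hy.1.le
    have hlower : 0 ≤ 2 * w x * w1 x := by
      apply le_of_tendsto tend0
      filter_upwards [Ioo_mem_nhdsGT hx.1] with y hy
      have hys : y ∈ s := ⟨hy.1, lt_trans hy.2 hx.2⟩
      rw [hGeq y hys]
      exact hG1mono hys hx hy.2.le
    linarith
  -- g = w² is constant
  set g : ℝ → ℝ := fun y => (w y)^2 with hg_def
  have hgdiff : DifferentiableOn ℝ g (Icc 0 1) :=
    (hwC1.differentiableOn one_ne_zero).pow 2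
  have hgderiv : ∀ x ∈ Ico (0:ℝ) 1, derivWithin g (Icc 0 1) x = 0 := by
    intro x hx
    rcases eq_or_lt_of_le hx.1 with h | h
    · have hdw0 : HasDerivWithinAt w 0 (Icc 0 1) 0 := by
        have h5 := ((hwC1.differentiableOn one_ne_zero) 0 hmem0).hasDerivWithinAt
        rwa [← hDW_def, hDW0] at h5
      have hg0 := (hdw0.fun_pow 2).derivWithin (hUD 0 hmem0)
      rw [← h, hg0]
      simp
    · have hxs : x ∈ s := ⟨h, hx.2⟩
      rw [derivWithin_of_mem_nhds (Icc_mem_nhds h hx.2)]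
      have hd : HasDerivAt g (2 * w x * w1 x) x := by
        have h5 := (Pw0 x hxs).fun_pow 2
        have e : 2 * w x * w1 x = ((2:ℕ):ℝ) * w x ^ (2 - 1) * w1 x := by push_cast; ring
        rw [e]; exact h5
      rw [hd.deriv, hzero x hxs]
  have hconst := constant_of_derivWithin_zero hgdiff hgderiv
  intro x hx
  have h6 := hconst x hx
  simp only [hg_def, hw0] at h6
  have hwx : w x = 0 := by
    have : (w x)^2 = 0 := by rw [h6]; norm_num
    exact pow_eq_zero_iff (n := 2) (by norm_num) |>.mp this
  have h7 : H₁ x - H₂ x = 0 := hwx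
  linarith
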